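/- Let J be an n×n real symmetric matrix with zero diagonal, and suppose J = D + W where D = ∑_{t=1}^s D^{(t)} is a sum of cut matrices D^{(t)} = CUT(R_t, C_t, d_t) with ∑_t d_t² ≤ 16‖J‖_F²/n². Let r_i(x) = ∑_{a∈R_i} x_a and c_i(x) = ∑_{b∈C_i} x_b. Then for any x, x' ∈ [-1,1]^n with |r_i(x) - r_i(x')| ≤ υn and |c_i(x) - c_i(x')| ≤ υn for all i, we have |xᵀDx - x'ᵀDx'| ≤ 8‖J‖_F υ n s^{1/2}. -/
import Mathlib


open Finset

noncomputable def frobNorm {n : ℕ} (J : Matrix (Fin n) (Fin n) ℝ) : ℝ :=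
  Real.sqrt (∑ i, ∑ j, (J i j) ^ 2)

/-- The cut matrix CUT(S, T, d). -/
def cutMatrix {n : ℕ} (S T : Finset (Fin n)) (d : ℝ) : Matrix (Fin n) (Fin n) ℝ :=
  Matrix.of fun i j => if i ∈ S ∧ j ∈ T then d else 0

lemma qform_single {n : ℕ} (S T : Finset (Fin n)) (e : ℝ) (y : Fin n → ℝ) :
    ∑ i, ∑ j, cutMatrix S T e i j * y i * y j
      = e * ((∑ a ∈ S, y a) * (∑ b ∈ T, y b)) := by
  rw [Finset.sum_mul_sum, Finset.mul_sum]
  simp_rw [Finset.mul_sum]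
  rw [← Finset.sum_subset (Finset.subset_univ S)]
  · apply Finset.sum_congr rfl
    intro i hi
    rw [← Finset.sum_subset (Finset.subset_univ T)]
    · apply Finset.sum_congr rfl
      intro j hj
      simp [cutMatrix, hi, hj, mul_comm, mul_assoc, mul_left_comm]
    · intro j _ hj
      simp [cutMatrix, hj]
  · intro i _ hi
    simp [cutMatrix, hi]

lemma qform_eq {n s : ℕ} (R C : Fin s → Finset (Fin n)) (d : Fin s → ℝ)
    (y : Fin n → ℝ) :
    ∑ i, ∑ j, (∑ t, cutMatrix (R t) (C t) (d t)) i j * y i * y j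
      = ∑ t, d t * ((∑ a ∈ R t, y a) * (∑ b ∈ C t, y b)) := by
  have h : ∀ i j, (∑ t, cutMatrix (R t) (C t) (d t)) i j
      = ∑ t, (cutMatrix (R t) (C t) (d t)) i j := by
    intro i j
    simp [Matrix.sum_apply]
  calc ∑ i, ∑ j, (∑ t, cutMatrix (R t) (C t) (d t)) i j * y i * y j
      = ∑ i, ∑ j, ∑ t, cutMatrix (R t) (C t) (d t) i j * y i * y j := by
        simp_rw [h, Finset.sum_mul]
    _ = ∑ i, ∑ t, ∑ j, cutMatrix (R t) (C t) (d t) i j * y i * y j :=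
        Finset.sum_congr rfl fun i _ => Finset.sum_comm
    _ = ∑ t, ∑ i, ∑ j, cutMatrix (R t) (C t) (d t) i j * y i * y j :=
        Finset.sum_comm
    _ = ∑ t, d t * ((∑ a ∈ R t, y a) * (∑ b ∈ C t, y b)) :=
        Finset.sum_congr rfl fun t _ => qform_single _ _ _ _

lemma abs_sum_le_card {n : ℕ} (T : Finset (Fin n)) (y : Fin n → ℝ)
    (hy : ∀ i, |y i| ≤ 1) : |∑ a ∈ T, y a| ≤ (n : ℝ) := by
  calc |∑ a ∈ T, y a| ≤ ∑ a ∈ T, |y a| := Finset.abs_sum_le_sum_abs _ _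
    _ ≤ ∑ a ∈ T, (1 : ℝ) := Finset.sum_le_sum fun a _ => hy a
    _ = T.card := by simp
    _ ≤ n := by exact_mod_cast (T.card_le_univ.trans_eq (by simp))

theorem cut_quadratic_form_stability (n s : ℕ)
    (J W : Matrix (Fin n) (Fin n) ℝ) (hsymm : J.IsSymm) (hdiag : ∀ i, J i i = 0)
    (R C : Fin s → Finset (Fin n)) (d : Fin s → ℝ)
    (hJ : J = (∑ t, cutMatrix (R t) (C t) (d t)) + W)
    (hd : ∑ t, (d t) ^ 2 ≤ 16 * frobNorm J ^ 2 / (n : ℝ) ^ 2)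
    (υ : ℝ) (hυ : υ ∈ Set.Ioo (0:ℝ) 1)
    (x x' : Fin n → ℝ) (hx : ∀ i, |x i| ≤ 1) (hx' : ∀ i, |x' i| ≤ 1)
    (hr : ∀ t, |(∑ a ∈ R t, x a) - ∑ a ∈ R t, x' a| ≤ υ * n)
    (hc : ∀ t, |(∑ b ∈ C t, x b) - ∑ b ∈ C t, x' b| ≤ υ * n) :
    |(∑ i, ∑ j, (∑ t, cutMatrix (R t) (C t) (d t)) i j * x i * x j) -
        ∑ i, ∑ j, (∑ t, cutMatrix (R t) (C t) (d t)) i j * x' i * x' j|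
      ≤ 8 * frobNorm J * υ * n * Real.sqrt s := by
  obtain ⟨hυ0, hυ1⟩ := hυ
  have hF : 0 ≤ frobNorm J := Real.sqrt_nonneg _
  rw [qform_eq, qform_eq]
  rcases Nat.eq_zero_or_pos n with hn | hn
  · subst hn
    have hd0 : ∀ t, d t = 0 := by
      intro t
      have h0 : ∑ t, (d t) ^ 2 ≤ 0 := by simpa using hd
      have := Finset.sum_nonneg (fun t (_ : t ∈ Finset.univ) => sq_nonneg (d t))
      have hsum : ∑ t, (d t) ^ 2 = 0 := le_antisymm h0 this
      have := (Finset.sum_eq_zero_iff_of_nonneg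
        (fun t _ => sq_nonneg (d t))).mp hsum t (Finset.mem_univ t)
      exact pow_eq_zero_iff (n := 2) (by norm_num) |>.mp this
    simp [hd0]
  have hnpos : (0:ℝ) < n := by exact_mod_cast hn
  -- per-term bound
  have key : ∀ t, |d t * ((∑ a ∈ R t, x a) * (∑ b ∈ C t, x b))
      - d t * ((∑ a ∈ R t, x' a) * (∑ b ∈ C t, x' b))|
      ≤ |d t| * (2 * υ * n ^ 2) := by
    intro t
    set r := ∑ a ∈ R t, x a
    set r' := ∑ a ∈ R t, x' a
    set c := ∑ b ∈ C t, x b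
    set c' := ∑ b ∈ C t, x' b
    have h1 : r * c - r' * c' = r * (c - c') + (r - r') * c' := by ring
    have hrb : |r| ≤ (n:ℝ) := abs_sum_le_card _ _ hx
    have hcb : |c'| ≤ (n:ℝ) := abs_sum_le_card _ _ hx'
    calc |d t * (r * c) - d t * (r' * c')| = |d t| * |r * c - r' * c'| := by
          rw [← mul_sub, abs_mul]
      _ ≤ |d t| * (|r| * |c - c'| + |r - r'| * |c'|) := by
          apply mul_le_mul_of_nonneg_left _ (abs_nonneg _)
          rw [h1]
          calc |r * (c - c') + (r - r') * c'|
              ≤ |r * (c - c')| + |(r - r') * c'| := abs_add_le _ _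
            _ = |r| * |c - c'| + |r - r'| * |c'| := by rw [abs_mul, abs_mul]
      _ ≤ |d t| * ((n:ℝ) * (υ * n) + υ * n * n) := by
          apply mul_le_mul_of_nonneg_left _ (abs_nonneg _)
          have h2 := hc t
          have h3 := hr t
          have h4 : |c - c'| ≤ υ * n := h2
          have h5 : |r - r'| ≤ υ * n := h3
          have := mul_le_mul hrb h4 (abs_nonneg _) (le_of_lt hnpos)
          have := mul_le_mul h5 hcb (abs_nonneg _) (by positivity : (0:ℝ) ≤ υ * n)
          nlinarith [abs_nonneg (c - c'), abs_nonneg (r - r'), abs_nonneg r, abs_nonneg c']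
      _ = |d t| * (2 * υ * n ^ 2) := by ring
  -- Cauchy-Schwarz for ∑ |d t|
  have hcs : ∑ t, |d t| ≤ Real.sqrt s * Real.sqrt (∑ t, (d t)^2) := by
    have hsq : (∑ t, |d t|) ^ 2 ≤ (s : ℝ) * ∑ t, (d t) ^ 2 := by
      have := sq_sum_le_card_mul_sum_sq (s := (Finset.univ : Finset (Fin s)))
        (f := fun t => |d t|)
      simpa [sq_abs] using this
    have h1 : ∑ t, |d t| ≤ Real.sqrt ((s : ℝ) * ∑ t, (d t) ^ 2) := by
      rw [← Real.sqrt_sq (Finset.sum_nonneg fun t _ => abs_nonneg _)]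
      exact Real.sqrt_le_sqrt hsq
    rwa [Real.sqrt_mul (by positivity)] at h1
  have hdsqrt : Real.sqrt (∑ t, (d t)^2) ≤ 4 * frobNorm J / n := by
    have : Real.sqrt (∑ t, (d t)^2) ≤ Real.sqrt (16 * frobNorm J ^ 2 / (n:ℝ)^2) :=
      Real.sqrt_le_sqrt hd
    rw [show (16 : ℝ) * frobNorm J ^ 2 / (n:ℝ)^2 = (4 * frobNorm J / n)^2 by ring,
      Real.sqrt_sq (by positivity)] at this
    exact this
  calc |∑ t, d t * ((∑ a ∈ R t, x a) * (∑ b ∈ C t, x b)) -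
        ∑ t, d t * ((∑ a ∈ R t, x' a) * (∑ b ∈ C t, x' b))|
      = |∑ t, (d t * ((∑ a ∈ R t, x a) * (∑ b ∈ C t, x b))
          - d t * ((∑ a ∈ R t, x' a) * (∑ b ∈ C t, x' b)))| := by
        rw [Finset.sum_sub_distrib]
    _ ≤ ∑ t, |d t * ((∑ a ∈ R t, x a) * (∑ b ∈ C t, x b))
          - d t * ((∑ a ∈ R t, x' a) * (∑ b ∈ C t, x' b))| :=
        Finset.abs_sum_le_sum_abs _ _
    _ ≤ ∑ t, |d t| * (2 * υ * n ^ 2) := Finset.sum_le_sum fun t _ => key t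
    _ = (∑ t, |d t|) * (2 * υ * n ^ 2) := by rw [Finset.sum_mul]
    _ ≤ (Real.sqrt s * (4 * frobNorm J / n)) * (2 * υ * n ^ 2) := by
        apply mul_le_mul_of_nonneg_right _ (by positivity)
        calc ∑ t, |d t| ≤ Real.sqrt s * Real.sqrt (∑ t, (d t)^2) := hcs
          _ ≤ Real.sqrt s * (4 * frobNorm J / n) :=
            mul_le_mul_of_nonneg_left hdsqrt (Real.sqrt_nonneg _)
    _ = 8 * frobNorm J * υ * n * Real.sqrt s := by field_simp; ring
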